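/- The geodesic midpoint of A and B equals the geodesic midpoint of B and A: A^{1/2}(A^{-1/2} B A^{-1/2})^{1/2} A^{1/2} = B^{1/2}(B^{-1/2} A B^{-1/2})^{1/2} B^{1/2}. -/

import Mathlib

open Matrix
open scoped ComplexOrder Classical

variable {n : Type*} [Fintype n] [DecidableEq n]

/-- Matrix logarithm of a Hermitian (positive definite) matrix, via functional calculus. -/
noncomputable def mlog (A : Matrix n n ℂ) : Matrix n n ℂ :=
  if h : A.IsHermitian then h.cfc Real.log else 0

/-- The positive definite square root of a positive definite matrix. -/
noncomputable def msqrt (A : Matrix n n ℂ) : Matrix n n ℂ :=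
  if h : A.PosDef then (h.posSemidef.1.eigenvectorUnitary : Matrix n n ℂ) *
    diagonal ((↑) ∘ (√·) ∘ h.posSemidef.1.eigenvalues) *
    (star h.posSemidef.1.eigenvectorUnitary : Matrix n n ℂ) else 0

/-- Frobenius norm. -/
noncomputable def frob (X : Matrix n n ℂ) : ℝ :=
  Real.sqrt ((Xᴴ * X).trace.re)

/-- Geodesic distance  d(A,B) = ‖log (A^{-1/2} B A^{-1/2})‖_F. -/
noncomputable def gd (A B : Matrix n n ℂ) : ℝ :=
  frob (mlog ((msqrt A)⁻¹ * B * (msqrt A)⁻¹))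

/-- Real power of a positive definite matrix: P^t = exp (t • log P). -/
noncomputable def mpow (A : Matrix n n ℂ) (t : ℝ) : Matrix n n ℂ :=
  NormedSpace.exp (t • mlog A)

/-- A positive semidefinite invertible matrix is positive definite. -/
lemma aux_posDef_of_posSemidef_isUnit {M : Matrix n n ℂ} (hM : M.PosSemidef)
    (hu : IsUnit M) : M.PosDef := by
  refine posDef_iff_dotProduct_mulVec.mpr ⟨hM.1, fun x hx => lt_of_le_of_ne (hM.dotProduct_mulVec_nonneg x) fun heq => hx ?_⟩
  have h0 : M *ᵥ x = 0 := (hM.dotProduct_mulVec_zero_iff x).mp heq.symm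
  have hinj := Matrix.mulVec_injective_iff_isUnit.mpr hu
  exact hinj (by simpa using h0)

/-- Conjugation by an invertible matrix preserves positive definiteness. -/
lemma aux_posDef_conj {M C : Matrix n n ℂ} (hM : M.PosDef) (hC : IsUnit C) :
    (Cᴴ * M * C).PosDef := by
  refine posDef_iff_dotProduct_mulVec.mpr ⟨isHermitian_conjTranspose_mul_mul C hM.1, fun x hx => ?_⟩
  have h : C *ᵥ x ≠ 0 := by
    intro h0
    exact hx (Matrix.mulVec_injective_iff_isUnit.mpr hC (by simpa using h0))
  simpa only [star_mulVec, dotProduct_mulVec, vecMul_vecMul] using hM.dotProduct_mulVec_pos h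

open scoped MatrixOrder in
lemma msqrt_eq_sqrt {A : Matrix n n ℂ} (hA : A.PosDef) : msqrt A = CFC.sqrt A := by
  rw [msqrt, dif_pos hA, CFC.sqrt_eq_cfc, cfc_nnreal_eq_real _ A, hA.posSemidef.1.cfc_eq]
  simp only [IsHermitian.cfc, Unitary.conjStarAlgAut_apply]
  congr 3
  funext i
  simp [Real.coe_sqrt, Real.coe_toNNReal', hA.posSemidef.eigenvalues_nonneg]

open scoped MatrixOrder in
lemma msqrt_mul_self {A : Matrix n n ℂ} (hA : A.PosDef) : msqrt A * msqrt A = A := by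
  rw [msqrt_eq_sqrt hA]; exact CFC.sqrt_mul_sqrt_self A hA.posSemidef.nonneg

open scoped MatrixOrder in
lemma msqrt_posDef {A : Matrix n n ℂ} (hA : A.PosDef) : (msqrt A).PosDef := by
  have hps : (msqrt A).PosSemidef := by rw [msqrt_eq_sqrt hA]; exact (CFC.sqrt_nonneg A).posSemidef
  refine aux_posDef_of_posSemidef_isUnit hps ?_
  rw [Matrix.isUnit_iff_isUnit_det]
  have : (msqrt A).det * (msqrt A).det = A.det := by
    rw [← det_mul, msqrt_mul_self hA]
  exact isUnit_of_mul_isUnit_left (by rw [this]; exact (Matrix.isUnit_iff_isUnit_det A).mp hA.isUnit)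

open scoped MatrixOrder in
/-- Uniqueness of the positive definite square root. -/
lemma msqrt_eq {X Y : Matrix n n ℂ} (hX : X.PosDef) (hY : Y.PosDef) (h : Y * Y = X) :
    msqrt X = Y := by
  rw [msqrt_eq_sqrt hX]
  exact (CFC.sqrt_eq_iff X Y hX.posSemidef.nonneg hY.posSemidef.nonneg).mpr h

theorem stmt8 (A B : Matrix n n ℂ) (hA : A.PosDef) (hB : B.PosDef) :
    msqrt A * msqrt ((msqrt A)⁻¹ * B * (msqrt A)⁻¹) * msqrt A =
      msqrt B * msqrt ((msqrt B)⁻¹ * A * (msqrt B)⁻¹) * msqrt B := by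
  set S := msqrt A with hSdef
  set T := msqrt B with hTdef
  have hS : S.PosDef := msqrt_posDef hA
  have hT : T.PosDef := msqrt_posDef hB
  have hSS : S * S = A := msqrt_mul_self hA
  have hTT : T * T = B := msqrt_mul_self hB
  have hSu : IsUnit S := hS.isUnit
  have hTu : IsUnit T := hT.isUnit
  have hSd : IsUnit S.det := (Matrix.isUnit_iff_isUnit_det S).mp hSu
  have hTd : IsUnit T.det := (Matrix.isUnit_iff_isUnit_det T).mp hTu
  have hSi : S * S⁻¹ = 1 := mul_nonsing_inv S hSd
  have hSi' : S⁻¹ * S = 1 := nonsing_inv_mul S hSd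
  have hTi : T * T⁻¹ = 1 := mul_nonsing_inv T hTd
  have hTi' : T⁻¹ * T = 1 := nonsing_inv_mul T hTd
  have hSinvH : (S⁻¹)ᴴ = S⁻¹ := hS.inv.isHermitian
  have hTinvH : (T⁻¹)ᴴ = T⁻¹ := hT.inv.isHermitian
  have hSinvU : IsUnit S⁻¹ := hS.inv.isUnit
  have hTinvU : IsUnit T⁻¹ := hT.inv.isUnit
  -- the inner matrix is posdef
  have hM : (S⁻¹ * B * S⁻¹).PosDef := by
    have := aux_posDef_conj hB hSinvU
    rwa [hSinvH] at this
  set R := msqrt (S⁻¹ * B * S⁻¹) with hRdef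
  have hR : R.PosDef := msqrt_posDef hM
  have hRR : R * R = S⁻¹ * B * S⁻¹ := msqrt_mul_self hM
  set G := S * R * S with hGdef
  have hG : G.PosDef := by
    have := aux_posDef_conj hR hSu
    rwa [hS.isHermitian.eq] at this
  have hGu : IsUnit G := hG.isUnit
  -- key identity: G * A⁻¹ * G = B
  have hAinv : A⁻¹ = S⁻¹ * S⁻¹ := by rw [← hSS, Matrix.mul_inv_rev]
  have key : G * A⁻¹ * G = B := by
    rw [hGdef, hAinv]
    calc S * R * S * (S⁻¹ * S⁻¹) * (S * R * S)
        = S * R * ((S * S⁻¹) * S⁻¹ * S) * R * S := by noncomm_ring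
      _ = S * (R * R) * S := by rw [hSi]; rw [show (1 : Matrix n n ℂ) * S⁻¹ * S = S⁻¹ * S by noncomm_ring, hSi']; noncomm_ring
      _ = S * (S⁻¹ * B * S⁻¹) * S := by rw [hRR]
      _ = (S * S⁻¹) * B * (S⁻¹ * S) := by noncomm_ring
      _ = B := by rw [hSi, hSi']; noncomm_ring
  -- hence G * B⁻¹ * G = A
  have key2 : G * B⁻¹ * G = A := by
    have hGd : IsUnit G.det := (Matrix.isUnit_iff_isUnit_det G).mp hGu
    have hGi : G * G⁻¹ = 1 := mul_nonsing_inv G hGd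
    have hGi' : G⁻¹ * G = 1 := nonsing_inv_mul G hGd
    have hAd : IsUnit A.det := (Matrix.isUnit_iff_isUnit_det A).mp hA.isUnit
    have hBinv : B⁻¹ = G⁻¹ * A * G⁻¹ := by
      apply inv_eq_right_inv
      rw [← key]
      calc G * A⁻¹ * G * (G⁻¹ * A * G⁻¹)
          = G * A⁻¹ * (G * G⁻¹) * A * G⁻¹ := by noncomm_ring
        _ = G * (A⁻¹ * A) * G⁻¹ := by rw [hGi]; noncomm_ring
        _ = G * G⁻¹ := by rw [nonsing_inv_mul A hAd]; noncomm_ring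
        _ = 1 := hGi
    rw [hBinv]
    calc G * (G⁻¹ * A * G⁻¹) * G = (G * G⁻¹) * A * (G⁻¹ * G) := by noncomm_ring
      _ = A := by rw [hGi, hGi']; noncomm_ring
  -- now identify msqrt (T⁻¹ * A * T⁻¹) with T⁻¹ * G * T⁻¹
  have hN : (T⁻¹ * A * T⁻¹).PosDef := by
    have := aux_posDef_conj hA hTinvU
    rwa [hTinvH] at this
  have hQ : (T⁻¹ * G * T⁻¹).PosDef := by
    have := aux_posDef_conj hG hTinvU
    rwa [hTinvH] at this
  have hBinv' : B⁻¹ = T⁻¹ * T⁻¹ := by rw [← hTT, Matrix.mul_inv_rev]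
  have hsq : (T⁻¹ * G * T⁻¹) * (T⁻¹ * G * T⁻¹) = T⁻¹ * A * T⁻¹ := by
    have : T⁻¹ * G * T⁻¹ * (T⁻¹ * G * T⁻¹) = T⁻¹ * (G * (T⁻¹ * T⁻¹) * G) * T⁻¹ := by noncomm_ring
    rw [this, ← hBinv', key2]
  have hmsq : msqrt (T⁻¹ * A * T⁻¹) = T⁻¹ * G * T⁻¹ := msqrt_eq hN hQ hsq
  rw [hmsq]
  calc S * R * S = G := rfl
    _ = (T * T⁻¹) * G * (T⁻¹ * T) := by rw [hTi, hTi']; noncomm_ring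
    _ = T * (T⁻¹ * G * T⁻¹) * T := by noncomm_ring
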